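/- The Mycielskian of a graph G satisfies χ(M(G)) = χ(G) + 1. -/

import Mathlib

set_option linter.unreachableTactic false
set_option linter.unusedTactic false
set_option linter.unnecessarySeqFocus false

/-- Adjacency relation of the Mycielskian of `G`: vertices are `v`-copies (`inl a`),
`u`-copies (`inr (inl a)`) and the apex `w` (`inr (inr ())`). -/
def mycielskAdj {V : Type} (G : SimpleGraph V) :
    V ⊕ V ⊕ Unit → V ⊕ V ⊕ Unit → Prop
  | Sum.inl a, Sum.inl b => G.Adj a b
  | Sum.inl a, Sum.inr (Sum.inl b) => G.Adj a b
  | Sum.inr (Sum.inl a), Sum.inl b => G.Adj a b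
  | Sum.inr (Sum.inl _), Sum.inr (Sum.inr _) => True
  | Sum.inr (Sum.inr _), Sum.inr (Sum.inl _) => True
  | _, _ => False

/-- The Mycielskian `M(G)` of a graph `G`. -/
def mycielskian {V : Type} (G : SimpleGraph V) : SimpleGraph (V ⊕ V ⊕ Unit) where
  Adj := mycielskAdj G
  symm := ⟨by
    rintro (a | b | c) (x | y | z) h <;>
      simp only [mycielskAdj] at h ⊢ <;> first | exact G.adj_symm h | exact h | trivial⟩
  loopless := ⟨by
    rintro (a | b | c) h <;> simp only [mycielskAdj] at h <;>
      first | exact G.irrefl h | exact h⟩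

lemma myc_upper {V : Type} {G : SimpleGraph V} {n : ℕ} (h : G.Colorable n) :
    (mycielskian G).Colorable (n + 1) := by
  obtain ⟨C⟩ := h
  refine ⟨SimpleGraph.Coloring.mk
    (fun x => match x with
      | Sum.inl a => (C a).castSucc
      | Sum.inr (Sum.inl a) => (C a).castSucc
      | Sum.inr (Sum.inr _) => Fin.last n) ?_⟩
  rintro (a | a | a) (b | b | b) h <;>
    simp only [mycielskian, mycielskAdj] at h
  · exact fun e => C.valid h (Fin.castSucc_injective _ e)
  · exact fun e => C.valid h (Fin.castSucc_injective _ e)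
  · exact fun e => C.valid h (Fin.castSucc_injective _ e)
  · exact (Fin.castSucc_lt_last _).ne
  · exact (Fin.castSucc_lt_last _).ne'
lemma myc_lower {V : Type} {G : SimpleGraph V} {k : ℕ}
    (h : (mycielskian G).Colorable (k + 1)) : G.Colorable k := by
  obtain ⟨C⟩ := h
  set cw : Fin (k + 1) := C (Sum.inr (Sum.inr ())) with hcw
  have hu : ∀ a : V, C (Sum.inr (Sum.inl a)) ≠ cw := by
    intro a
    exact C.valid (show (mycielskian G).Adj (Sum.inr (Sum.inl a)) (Sum.inr (Sum.inr ())) from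
      trivial)
  let f : V → {x : Fin (k + 1) // x ≠ cw} := fun a =>
    if hv : C (Sum.inl a) = cw then ⟨C (Sum.inr (Sum.inl a)), hu a⟩
    else ⟨C (Sum.inl a), hv⟩
  have valid : ∀ {a b : V}, G.Adj a b → f a ≠ f b := by
    intro a b hab
    simp only [f]
    split_ifs with h1 h2 h2
    · exact absurd (h1.trans h2.symm) (C.valid (show (mycielskian G).Adj (Sum.inl a) (Sum.inl b) from hab))
    · intro e
      exact C.valid (show (mycielskian G).Adj (Sum.inr (Sum.inl a)) (Sum.inl b) from hab)
        (congrArg Subtype.val e)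
    · intro e
      exact C.valid (show (mycielskian G).Adj (Sum.inl a) (Sum.inr (Sum.inl b)) from hab)
        (congrArg Subtype.val e)
    · intro e
      exact C.valid (show (mycielskian G).Adj (Sum.inl a) (Sum.inl b) from hab)
        (congrArg Subtype.val e)
  have D : G.Coloring {x : Fin (k + 1) // x ≠ cw} := SimpleGraph.Coloring.mk f valid
  have hcard : Fintype.card {x : Fin (k + 1) // x ≠ cw} = k := by
    simp [Fintype.card_subtype_compl]
  exact hcard ▸ D.colorable

/-- The Mycielskian of a graph `G` satisfies `χ(M(G)) = χ(G) + 1`. -/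
theorem stmt_8 {V : Type} [Fintype V] (G : SimpleGraph V) :
    (mycielskian G).chromaticNumber = G.chromaticNumber + 1 := by
  have hG : G.Colorable (ENat.toNat G.chromaticNumber) :=
    G.colorable_chromaticNumber_of_fintype
  set n : ℕ := ENat.toNat G.chromaticNumber with hn
  have hGne : G.chromaticNumber ≠ ⊤ :=
    SimpleGraph.chromaticNumber_ne_top_iff_exists.mpr ⟨_, G.colorable_of_fintype⟩
  have hGn : G.chromaticNumber = (n : ℕ∞) := (ENat.coe_toNat hGne).symm
  have hM : (mycielskian G).Colorable (n + 1) := myc_upper hG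
  have hMne : (mycielskian G).chromaticNumber ≠ ⊤ :=
    SimpleGraph.chromaticNumber_ne_top_iff_exists.mpr ⟨_, hM⟩
  set k : ℕ := ENat.toNat (mycielskian G).chromaticNumber with hk
  have hMk : (mycielskian G).chromaticNumber = (k : ℕ∞) := (ENat.coe_toNat hMne).symm
  have hMcol : (mycielskian G).Colorable k :=
    (mycielskian G).colorable_of_chromaticNumber_ne_top hMne
  -- k ≥ 1
  have hk1 : 1 ≤ k := by
    by_contra hlt
    interval_cases k
    obtain ⟨C⟩ := hMcol
    exact (C (Sum.inr (Sum.inr ()))).elim0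
  obtain ⟨k', hk'⟩ : ∃ k', k = k' + 1 := ⟨k - 1, by omega⟩
  rw [hk'] at hMcol hMk
  have hGk : G.Colorable k' := myc_lower hMcol
  have h1 : (mycielskian G).chromaticNumber ≤ (n : ℕ∞) + 1 := by
    rw [show ((n : ℕ∞) + 1) = ((n + 1 : ℕ) : ℕ∞) by push_cast; ring]
    exact hM.chromaticNumber_le
  have h2 : (n : ℕ∞) ≤ (k' : ℕ∞) := by
    rw [← hGn]
    exact hGk.chromaticNumber_le
  rw [hGn, hMk]
  have hnk : n ≤ k' := by exact_mod_cast h2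
  have hkn : k' + 1 ≤ n + 1 := by
    have := h1
    rw [hMk] at this
    have : ((k' + 1 : ℕ) : ℕ∞) ≤ ((n + 1 : ℕ) : ℕ∞) := by
      rw [show ((n + 1 : ℕ) : ℕ∞) = (n : ℕ∞) + 1 by push_cast; ring]
      exact this
    exact_mod_cast this
  have : k' + 1 = n + 1 := by omega
  rw [show (n : ℕ∞) + 1 = ((n + 1 : ℕ) : ℕ∞) by push_cast; ring, ← this]
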